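/- Let J = Σ_{ν≥0} (a_ν(x)/ν!) D^ν with deg a_ν ≤ ν, and write a_ν(x) = Σ_{i=0}^{ν} a_i^{[ν]} x^i. Then J is an isomorphism of the polynomial space if and only if Σ_{μ=0}^{n} C(n,μ) a_μ^{[μ]} ≠ 0 for every n ≥ 0. -/

import Mathlib

open Polynomial

lemma deg_lt_succ_iff {p : Polynomial ℂ} {n : ℕ} :
    p.degree < ((n+1 : ℕ) : WithBot ℕ) ↔ p.degree ≤ (n : ℕ) := by
  rw [degree_lt_iff_coeff_zero, degree_le_iff_coeff_zero]
  constructor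
  · intro h m hm
    apply h
    exact_mod_cast hm
  · intro h m hm
    apply h
    exact_mod_cast hm

lemma term_coeff {b : Polynomial ℂ} {ν : ℕ} (hb : b.degree ≤ (ν : ℕ))
    (p : Polynomial ℂ) (n : ℕ) (hp : p.degree ≤ (n : ℕ)) :
    (b * Polynomial.derivative^[ν] p).coeff n =
      if ν ≤ n then b.coeff ν * (n.descFactorial ν : ℂ) * p.coeff n else 0 := by
  rw [coeff_mul]
  have hz : ∀ i j : ℕ, i + j = n → i ≠ ν →
      b.coeff i * (Polynomial.derivative^[ν] p).coeff j = 0 := by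
    intro i j hij hne
    rcases lt_or_gt_of_ne hne with hlt | hgt
    · have : p.coeff (j + ν) = 0 := by
        apply coeff_eq_zero_of_degree_lt
        apply lt_of_le_of_lt hp
        exact_mod_cast (by omega : n < j + ν)
      rw [coeff_iterate_derivative, this, smul_zero, mul_zero]
    · have : b.coeff i = 0 := by
        apply coeff_eq_zero_of_degree_lt
        apply lt_of_le_of_lt hb
        exact_mod_cast hgt
      rw [this, zero_mul]
  by_cases hν : ν ≤ n
  · rw [if_pos hν]
    rw [Finset.sum_eq_single (ν, n - ν)]
    · rw [coeff_iterate_derivative, Nat.sub_add_cancel hν]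
      push_cast [nsmul_eq_mul]
      ring
    · rintro ⟨i, j⟩ hmem hne
      have hij : i + j = n := Finset.HasAntidiagonal.mem_antidiagonal.mp hmem
      apply hz i j hij
      intro h
      apply hne
      subst h
      simp [Prod.ext_iff]
      omega
    · intro h
      exact absurd (Finset.HasAntidiagonal.mem_antidiagonal.mpr (Nat.add_sub_cancel' hν)) h
  · rw [if_neg hν]
    apply Finset.sum_eq_zero
    rintro ⟨i, j⟩ hmem
    have hij : i + j = n := Finset.HasAntidiagonal.mem_antidiagonal.mp hmem
    apply hz i j hij
    omega

lemma Jcoeff (a : ℕ → Polynomial ℂ) (hdeg : ∀ ν, (a ν).degree ≤ (ν : ℕ))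
    (J : Polynomial ℂ →ₗ[ℂ] Polynomial ℂ)
    (hJ : ∀ p, J p = ∑ ν ∈ Finset.range (p.natDegree + 1),
        ((Nat.factorial ν : ℂ))⁻¹ • (a ν * Polynomial.derivative^[ν] p))
    (p : Polynomial ℂ) (n : ℕ) (hp : p.degree ≤ (n : ℕ)) :
    (J p).coeff n = (∑ μ ∈ Finset.range (n + 1), (n.choose μ : ℂ) * (a μ).coeff μ) * p.coeff n := by
  rw [hJ p, finset_sum_coeff]
  simp only [coeff_smul, smul_eq_mul]
  have hterm : ∀ ν ∈ Finset.range (p.natDegree + 1),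
      ((Nat.factorial ν : ℂ))⁻¹ * (a ν * Polynomial.derivative^[ν] p).coeff n =
      if ν ≤ n then (n.choose ν : ℂ) * (a ν).coeff ν * p.coeff n else 0 := by
    intro ν _
    rw [term_coeff (hdeg ν) p n hp]
    split_ifs with h
    · rw [Nat.descFactorial_eq_factorial_mul_choose]
      have : (Nat.factorial ν : ℂ) ≠ 0 := by exact_mod_cast Nat.factorial_ne_zero ν
      push_cast
      field_simp
    · rw [mul_zero]
  rw [Finset.sum_congr rfl hterm]
  by_cases hc : p.coeff n = 0
  · rw [hc, mul_zero]
    apply Finset.sum_eq_zero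
    intro ν _
    split_ifs <;> simp [hc]
  · have hnd : p.natDegree = n := by
      have h1 : p.natDegree ≤ n := natDegree_le_iff_degree_le.mpr hp
      have h2 : n ≤ p.natDegree := le_natDegree_of_ne_zero hc
      omega
    rw [hnd, Finset.sum_mul]
    apply Finset.sum_congr rfl
    intro ν hν
    rw [if_pos (by simpa [Nat.lt_succ_iff] using Finset.mem_range.mp hν)]

lemma Jdeg (a : ℕ → Polynomial ℂ) (hdeg : ∀ ν, (a ν).degree ≤ (ν : ℕ))
    (J : Polynomial ℂ →ₗ[ℂ] Polynomial ℂ)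
    (hJ : ∀ p, J p = ∑ ν ∈ Finset.range (p.natDegree + 1),
        ((Nat.factorial ν : ℂ))⁻¹ • (a ν * Polynomial.derivative^[ν] p))
    (p : Polynomial ℂ) (d : ℕ) (hp : p.degree ≤ (d : ℕ)) : (J p).degree ≤ (d : ℕ) := by
  rw [degree_le_iff_coeff_zero]
  intro m hm
  have hm' : d < m := by exact_mod_cast hm
  have hpm : p.degree ≤ (m : ℕ) := le_trans hp (by exact_mod_cast hm'.le)
  rw [Jcoeff a hdeg J hJ p m hpm,
    coeff_eq_zero_of_degree_lt (lt_of_le_of_lt hp (by exact_mod_cast hm')), mul_zero]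

theorem stmt5 (a : ℕ → Polynomial ℂ) (hdeg : ∀ ν, (a ν).degree ≤ (ν : ℕ))
    (J : Polynomial ℂ →ₗ[ℂ] Polynomial ℂ)
    (hJ : ∀ p, J p = ∑ ν ∈ Finset.range (p.natDegree + 1),
        ((Nat.factorial ν : ℂ))⁻¹ • (a ν * Polynomial.derivative^[ν] p)) :
    Function.Bijective J ↔
      ∀ n : ℕ, (∑ μ ∈ Finset.range (n + 1), (n.choose μ : ℂ) * (a μ).coeff μ) ≠ 0 := by
  set c : ℕ → ℂ := fun n => ∑ μ ∈ Finset.range (n + 1), (n.choose μ : ℂ) * (a μ).coeff μ with hcdef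
  constructor
  · intro hbij n
    intro hc
    -- J maps degreeLT (n+1) into degreeLT n, contradicting injectivity by dimension count
    have hmap : ∀ p : Polynomial ℂ, p ∈ degreeLT ℂ (n + 1) → J p ∈ degreeLT ℂ n := by
      intro p hp
      rw [mem_degreeLT] at hp ⊢
      have hple : p.degree ≤ (n : ℕ) := deg_lt_succ_iff.mp (by exact_mod_cast hp)
      rw [degree_lt_iff_coeff_zero]
      intro m hm
      rcases eq_or_lt_of_le hm with h | h
      · subst h
        rw [Jcoeff a hdeg J hJ p n hple, hc, zero_mul]
      · exact coeff_eq_zero_of_degree_lt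
          (lt_of_le_of_lt (Jdeg a hdeg J hJ p n hple) (by exact_mod_cast h))
    let g : degreeLT ℂ (n + 1) →ₗ[ℂ] degreeLT ℂ n :=
      (J.domRestrict (degreeLT ℂ (n + 1))).codRestrict (degreeLT ℂ n)
        (fun p => hmap p.1 p.2)
    have hg : Function.Injective g := by
      intro x y hxy
      apply Subtype.ext
      apply hbij.1
      exact congrArg Subtype.val hxy
    haveI : Module.Finite ℂ (degreeLT ℂ (n + 1)) :=
      Module.Finite.equiv (degreeLTEquiv ℂ (n + 1)).symm
    haveI : Module.Finite ℂ (degreeLT ℂ n) :=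
      Module.Finite.equiv (degreeLTEquiv ℂ n).symm
    have hle := LinearMap.finrank_le_finrank_of_injective hg
    have h1 : Module.finrank ℂ (degreeLT ℂ (n + 1)) = n + 1 := by
      rw [(degreeLTEquiv ℂ (n + 1)).finrank_eq]
      simp
    have h2 : Module.finrank ℂ (degreeLT ℂ n) = n := by
      rw [(degreeLTEquiv ℂ n).finrank_eq]
      simp
    rw [h1, h2] at hle
    omega
  · intro hc
    constructor
    · -- injective
      apply (injective_iff_map_eq_zero J).mpr
      intro p hp
      by_contra hne
      have hle : p.degree ≤ (p.natDegree : ℕ) := degree_le_natDegree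
      have := Jcoeff a hdeg J hJ p p.natDegree hle
      rw [hp, coeff_zero] at this
      have hlc : p.coeff p.natDegree ≠ 0 := by
        exact mt leadingCoeff_eq_zero.mp hne
      exact (mul_ne_zero (hc p.natDegree) hlc) this.symm
    · -- surjective
      have key : ∀ n : ℕ, ∀ q : Polynomial ℂ, q.degree < (n : WithBot ℕ) → ∃ p, J p = q := by
        intro n
        induction n with
        | zero =>
          intro q hq
          refine ⟨0, ?_⟩
          rw [map_zero]
          symm
          ext m
          rw [coeff_zero]
          exact (degree_lt_iff_coeff_zero q 0).mp (by exact_mod_cast hq) m (Nat.zero_le m)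
        | succ n ih =>
          intro q hq
          have hqle : q.degree ≤ (n : ℕ) := deg_lt_succ_iff.mp (by exact_mod_cast hq)
          set p₁ : Polynomial ℂ := Polynomial.C ((c n)⁻¹ * q.coeff n) * X ^ n with hp₁
          have hp₁deg : p₁.degree ≤ (n : ℕ) := degree_C_mul_X_pow_le _ _
          have hc1 : (J p₁).coeff n = q.coeff n := by
            have hp₁c : p₁.coeff n = (c n)⁻¹ * q.coeff n := by
              rw [hp₁, coeff_C_mul, coeff_X_pow, if_pos rfl, mul_one]
            rw [Jcoeff a hdeg J hJ p₁ n hp₁deg, hp₁c]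
            show c n * ((c n)⁻¹ * q.coeff n) = q.coeff n
            rw [← mul_assoc, mul_inv_cancel₀ (hc n), one_mul]
          have hr : (q - J p₁).degree < (n : ℕ) := by
            rw [degree_lt_iff_coeff_zero]
            intro m hm
            rw [coeff_sub]
            rcases eq_or_lt_of_le hm with rfl | h
            · rw [hc1, sub_self]
            · rw [coeff_eq_zero_of_degree_lt (lt_of_le_of_lt hqle (by exact_mod_cast h)),
                coeff_eq_zero_of_degree_lt
                  (lt_of_le_of_lt (Jdeg a hdeg J hJ p₁ n hp₁deg) (by exact_mod_cast h)),
                sub_self]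
          obtain ⟨p₂, hp₂⟩ := ih _ hr
          refine ⟨p₁ + p₂, ?_⟩
          rw [map_add, hp₂]
          ring
      intro q
      exact key (q.natDegree + 1) q
        (lt_of_le_of_lt degree_le_natDegree (by exact_mod_cast Nat.lt_succ_self _))
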